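/- In a plurality election with candidate set C, votes V containing k manipulators, unregistered votes U, and add limit L: with manipulators cooperating with the chair (all ranking p first) and the chair adding x = min(L, number of unregistered votes ranking p first plus unregistered manipulators) voters whose ballots rank p first, p becomes a winner iff score_V(p) + x ≥ max over d ≠ p of score_V(d), where scores count first-place votes among registered non-added voters with manipulators voting for p. -/

import Mathlib

/-- Plurality score of `c` among the voters of the finite type `ι` with top choices `b`. -/
def plScore {ι C : Type*} [Fintype ι] [DecidableEq C] (b : ι → C) (c : C) : ℕ :=
  (Finset.univ.filter fun v : ι => b v = c).card

/-- Constructive control by adding voters for plurality, with cooperating manipulators.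
Registered voters `ι` contain manipulators `M` (who all vote for `p`); unregistered
voters `υ` have fixed ballots `unregFixed`, except the unregistered manipulators `MU`,
who vote for `p`; the chair may add at most `L` unregistered voters.  Then `p` can be
made a winner iff `score(p) + x ≥ score(d)` for every `d ≠ p`, where scores are among
the registered voters (with the manipulators voting for `p`) and
`x = min(L, #unregistered voters for p + #unregistered manipulators)`. -/
theorem stmt15 {ι υ C : Type*} [Fintype ι] [Fintype υ] [DecidableEq ι] [DecidableEq υ]
    [DecidableEq C]
    (fixed : ι → C) (M : Finset ι) (unregFixed : υ → C) (MU : Finset υ) (L : ℕ) (p : C) :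
    (∃ S : Finset υ, S.card ≤ L ∧
        ∀ d : C, d ≠ p →
          plScore (fun v => if v ∈ M then p else fixed v) d +
              (S.filter fun u => (if u ∈ MU then p else unregFixed u) = d).card ≤
            plScore (fun v => if v ∈ M then p else fixed v) p +
              (S.filter fun u => (if u ∈ MU then p else unregFixed u) = p).card) ↔
    (∀ d : C, d ≠ p →
        plScore (fun v => if v ∈ M then p else fixed v) d ≤
          plScore (fun v => if v ∈ M then p else fixed v) p +
            min L ((MUᶜ.filter fun u => unregFixed u = p).card + MU.card)) := by
  constructor
  · rintro ⟨S, hSL, hS⟩ d hd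
    have h := hS d hd
    have h1 : (S.filter fun u => (if u ∈ MU then p else unregFixed u) = p).card ≤
        min L ((MUᶜ.filter fun u => unregFixed u = p).card + MU.card) := by
      refine le_min (le_trans (Finset.card_filter_le _ _) hSL) ?_
      have hsub : (S.filter fun u => (if u ∈ MU then p else unregFixed u) = p) ⊆
          (MUᶜ.filter fun u => unregFixed u = p) ∪ MU := by
        intro u hu
        rw [Finset.mem_filter] at hu
        by_cases hMU : u ∈ MU
        · exact Finset.mem_union_right _ hMU
        · refine Finset.mem_union_left _ ?_
          rw [Finset.mem_filter]
          refine ⟨Finset.mem_compl.2 hMU, ?_⟩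
          simpa [hMU] using hu.2
      exact le_trans (Finset.card_le_card hsub) (Finset.card_union_le _ _)
    omega
  · intro h
    set P : Finset υ := MU ∪ (MUᶜ.filter fun u => unregFixed u = p) with hP
    have hcard : P.card = MU.card + (MUᶜ.filter fun u => unregFixed u = p).card := by
      rw [hP, Finset.card_union_of_disjoint]
      exact Finset.disjoint_left.2 fun u hu hu' =>
        Finset.mem_compl.1 (Finset.mem_filter.1 hu').1 hu
    obtain ⟨S, hSP, hScard⟩ := Finset.exists_subset_card_eq (s := P) (n := min L P.card) (min_le_right _ _)
    refine ⟨S, le_trans hScard.le (min_le_left _ _), ?_⟩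
    intro d hd
    have hballot : ∀ u ∈ S, (if u ∈ MU then p else unregFixed u) = p := by
      intro u hu
      have := hSP hu
      rw [hP, Finset.mem_union] at this
      rcases this with h' | h'
      · simp [h']
      · rw [Finset.mem_filter, Finset.mem_compl] at h'
        simp [h'.1, h'.2]
    have hfp : (S.filter fun u => (if u ∈ MU then p else unregFixed u) = p) = S :=
      Finset.filter_eq_self.2 hballot
    have hfd : (S.filter fun u => (if u ∈ MU then p else unregFixed u) = d) = ∅ := by
      refine Finset.filter_eq_empty_iff.2 fun u hu => ?_
      rw [hballot u hu]
      exact fun e => hd e.symm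
    rw [hfp, hfd]
    have := h d hd
    have hc : S.card = min L ((MUᶜ.filter fun u => unregFixed u = p).card + MU.card) := by
      rw [hScard, hcard]; omega
    simp [hc]
    omega
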